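/- Let p be a prime and let P be a finite p-group acting by automorphisms on a nontrivial finite p-group G. Then G has a P-admissible maximal subgroup, i.e., a maximal subgroup M of G such that x • M = M for all x ∈ P. -/

import Mathlib

section Aux

variable {p : ℕ} [Fact p.Prime] {G : Type*} [Group G]

/-- A subgroup of prime index is a coatom. -/
lemma aux_isCoatom_of_index_prime {M : Subgroup G} (h : M.index = p) : IsCoatom M := by
  have hp := Fact.out (p := p.Prime)
  constructor
  · intro htop
    rw [htop, Subgroup.index_top] at h
    exact hp.one_lt.ne h
  · intro K hMK
    have hmul := Subgroup.relIndex_mul_index hMK.le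
    rw [h] at hmul
    rcases (hp.eq_one_or_self_of_dvd K.index (Dvd.intro_left _ hmul)) with h1 | hKp
    · exact Subgroup.index_eq_one.mp h1
    · rw [hKp] at hmul
      have hrel : M.relIndex K = 1 := by
        have := Nat.eq_of_mul_eq_mul_right hp.pos (hmul.trans (one_mul p).symm)
        exact this
      exact absurd (Subgroup.relIndex_eq_one.mp hrel) (not_le_of_gt hMK)


/-- A coatom of a finite `p`-group has index `p`. -/
lemma aux_index_coatom [Finite G] (hG : IsPGroup p G) {M : Subgroup G}
    (hM : IsCoatom M) : M.index = p := by
  have hp := Fact.out (p := p.Prime)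
  haveI : Group.IsNilpotent G := hG.isNilpotent
  haveI : M.Normal := Subgroup.NormalizerCondition.normal_of_coatom M normalizerCondition_of_isNilpotent hM
  set Q := G ⧸ M with hQ
  have hQp : IsPGroup p Q := hG.to_quotient M
  obtain ⟨n, hn⟩ := hQp.exists_card_eq
  have hcardQ : Nat.card Q = M.index := rfl
  have hn1 : 1 ≤ n := by
    by_contra hcon
    interval_cases n
    · rw [pow_zero, hcardQ] at hn
      exact hM.1 (Subgroup.index_eq_one.mp hn)
  -- find an element of order p in Q
  obtain ⟨g, hg⟩ := exists_prime_orderOf_dvd_card' (G := Q) p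
    (by rw [hn]; exact dvd_pow_self p (Nat.one_le_iff_ne_zero.mp hn1))
  -- the cyclic subgroup generated by g must be everything
  have hsur : Function.Surjective (QuotientGroup.mk' M) := Quotient.mk''_surjective
  have hcomap : M ≤ (Subgroup.zpowers g).comap (QuotientGroup.mk' M) := by
    intro m hm
    simp only [Subgroup.mem_comap]
    have : (QuotientGroup.mk' M) m = 1 := by
      rw [← MonoidHom.mem_ker, QuotientGroup.ker_mk']; exact hm
    rw [this]; exact Subgroup.one_mem _
  have hg1 : g ≠ 1 := by
    intro h
    rw [h, orderOf_one] at hg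
    exact hp.one_lt.ne hg
  have hne : M ≠ (Subgroup.zpowers g).comap (QuotientGroup.mk' M) := by
    intro h
    obtain ⟨q, hq⟩ := hsur g
    have hq' : q ∈ (Subgroup.zpowers g).comap (QuotientGroup.mk' M) := by
      simp only [Subgroup.mem_comap, hq]
      exact Subgroup.mem_zpowers g
    rw [← h] at hq'
    have : (QuotientGroup.mk' M) q = 1 := by
      rw [← MonoidHom.mem_ker, QuotientGroup.ker_mk']
      exact hq'
    exact hg1 (hq ▸ this)
  have htop : (Subgroup.zpowers g).comap (QuotientGroup.mk' M) = ⊤ :=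
    hM.2 _ (hcomap.lt_of_ne hne)
  have : Subgroup.zpowers g = ⊤ := by
    have := congrArg (Subgroup.map (QuotientGroup.mk' M)) htop
    rwa [Subgroup.map_comap_eq_self_of_surjective hsur,
      Subgroup.map_top_of_surjective _ hsur] at this
  have : Nat.card Q = p := by
    rw [← hg, ← Nat.card_zpowers, this, Subgroup.card_top]
  rw [← hcardQ, this]

end Aux

/-- If a finite `p`-group `P` acts by automorphisms (via `φ : P →* Aut G`) on a nontrivial
finite `p`-group `G`, then `G` has a `P`-admissible maximal subgroup, i.e. a maximal subgroup
`M` with `φ(x)(M) = M` for all `x ∈ P`. -/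
theorem exists_admissible_maximal_subgroup (p : ℕ) (hp : p.Prime) (P G : Type*) [Group P]
    [Group G] [Finite P] [Finite G] [Nontrivial G] (hP : IsPGroup p P) (hG : IsPGroup p G)
    (φ : P →* MulAut G) :
    ∃ M : Subgroup G, IsCoatom M ∧ ∀ x : P, M.map (φ x).toMonoidHom = M := by
  haveI : Fact p.Prime := ⟨hp⟩
  classical
  -- the fixed prime-order target group
  have hcardK : Nat.card (Multiplicative (ZMod p)) = p :=
    (Nat.card_congr Multiplicative.toAdd).trans (Nat.card_zmod p)
  -- Step 1: there exists a nontrivial homomorphism `G →* Multiplicative (ZMod p)`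
  obtain ⟨M0, hM0, -⟩ :=
    (eq_top_or_exists_le_coatom (⊥ : Subgroup G)).resolve_left bot_ne_top
  haveI : M0.Normal := by
    haveI : Group.IsNilpotent G := hG.isNilpotent
    exact Subgroup.NormalizerCondition.normal_of_coatom M0
      normalizerCondition_of_isNilpotent hM0
  have hQcard : Nat.card (G ⧸ M0) = p := aux_index_coatom hG hM0
  let e : (G ⧸ M0) ≃* Multiplicative (ZMod p) := mulEquivOfPrimeCardEq hQcard hcardK
  obtain ⟨g0, hg0⟩ : ∃ g : G, g ∉ M0 := by
    by_contra hcon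
    push_neg at hcon
    exact hM0.1 (Subgroup.eq_top_iff' M0 |>.mpr hcon)
  have hf0 : e.toMonoidHom.comp (QuotientGroup.mk' M0) ≠ 1 := by
    intro h
    have := congrFun (congrArg DFunLike.coe h) g0
    simp only [MonoidHom.comp_apply, MonoidHom.one_apply, MulEquiv.coe_toMonoidHom] at this
    rw [map_eq_one_iff _ e.injective] at this
    exact hg0 ((QuotientGroup.eq_one_iff g0).mp this)
  haveI : Nontrivial (G →* Multiplicative (ZMod p)) :=
    ⟨⟨_, 1, hf0⟩⟩
  -- Step 2: the hom group is a finite `p`-group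
  haveI : Finite (G →* Multiplicative (ZMod p)) :=
    Finite.of_injective (fun f => (f : G → Multiplicative (ZMod p))) DFunLike.coe_injective
  have hHp : IsPGroup p (G →* Multiplicative (ZMod p)) := by
    intro f
    refine ⟨1, ?_⟩
    ext g
    rw [pow_one]
    show f g ^ p = 1
    have h : f g ^ Nat.card (Multiplicative (ZMod p)) = 1 := pow_card_eq_one'
    rwa [hcardK] at h
  -- Step 3: the action of `P` on the hom group
  letI : MulAction P (G →* Multiplicative (ZMod p)) :=
    { smul := fun x f => f.comp ((φ x⁻¹).toMonoidHom)
      one_smul := fun f => by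
        ext g
        show f ((φ 1⁻¹) g) = f g
        simp
      mul_smul := fun x y f => by
        ext g
        show f ((φ (x * y)⁻¹) g) = f ((φ y⁻¹) ((φ x⁻¹) g))
        rw [mul_inv_rev, map_mul]
        rfl }
  have hsmul : ∀ (x : P) (f : G →* Multiplicative (ZMod p)),
      x • f = f.comp ((φ x⁻¹).toMonoidHom) := fun _ _ => rfl
  -- Step 4: fixed-point counting
  have hmod := hP.card_modEq_card_fixedPoints (G →* Multiplicative (ZMod p))
  obtain ⟨n, hn⟩ := hHp.exists_card_eq
  have hn1 : 1 ≤ n := by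
    rcases Nat.eq_zero_or_pos n with h | h
    · rw [h, pow_zero] at hn
      exact absurd (Nat.card_eq_one_iff_unique.mp hn).1 (not_subsingleton _)
    · exact h
  have hdvd : p ∣ Nat.card (MulAction.fixedPoints P (G →* Multiplicative (ZMod p))) := by
    have h0 : Nat.card (G →* Multiplicative (ZMod p)) ≡ 0 [MOD p] := by
      rw [hn]
      exact (Nat.modEq_zero_iff_dvd).mpr (dvd_pow_self p (Nat.one_le_iff_ne_zero.mp hn1))
    exact (Nat.modEq_zero_iff_dvd).mp (hmod.symm.trans h0)
  have hone : (1 : G →* Multiplicative (ZMod p)) ∈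
      MulAction.fixedPoints P (G →* Multiplicative (ZMod p)) := by
    intro x
    rw [hsmul]
    ext g
    rfl
  haveI : Finite (MulAction.fixedPoints P (G →* Multiplicative (ZMod p))) :=
    Subtype.finite
  have hcard2 : 1 < Nat.card (MulAction.fixedPoints P (G →* Multiplicative (ZMod p))) := by
    have hpos : 0 < Nat.card (MulAction.fixedPoints P (G →* Multiplicative (ZMod p))) := by
      rw [Nat.card_pos_iff]
      exact ⟨⟨⟨1, hone⟩⟩, inferInstance⟩
    exact hp.one_lt.trans_le (Nat.le_of_dvd hpos hdvd)
  -- there is a fixed point different from 1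
  obtain ⟨f, hf_fixed, hf_ne⟩ : ∃ f ∈ MulAction.fixedPoints P (G →* Multiplicative (ZMod p)),
      f ≠ 1 := by
    haveI : Nontrivial (MulAction.fixedPoints P (G →* Multiplicative (ZMod p))) :=
      Finite.one_lt_card_iff_nontrivial.mp hcard2
    obtain ⟨a, b, hab⟩ := exists_pair_ne (MulAction.fixedPoints P (G →* Multiplicative (ZMod p)))
    by_cases ha : (a : G →* Multiplicative (ZMod p)) = 1
    · exact ⟨b, b.2, by rw [← ha]; exact fun h => hab (Subtype.ext h.symm ▸ rfl)⟩
    · exact ⟨a, a.2, ha⟩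
  -- Step 5: the kernel of `f` works
  refine ⟨f.ker, ?_, ?_⟩
  · -- f is surjective since its range is a nontrivial subgroup of a group of prime order
    have hker : f.ker.index = p := by
      rw [Subgroup.index_ker]
      have hdvd' : Nat.card f.range ∣ p := by
        have h := Subgroup.card_subgroup_dvd_card f.range
        rwa [hcardK] at h
      rcases (hp.eq_one_or_self_of_dvd _ hdvd') with h1 | hp'
    --
      · exfalso
        apply hf_ne
        have : f.range = ⊥ := (Subgroup.card_le_one_iff_eq_bot f.range).mp h1.le
        ext g
        have : f g ∈ f.range := ⟨g, rfl⟩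
        rw [‹f.range = ⊥›] at this
        simpa using this
      · exact hp'
    exact aux_isCoatom_of_index_prime hker
  · intro x
    have hfix := hf_fixed x
    rw [hsmul] at hfix
    rw [Subgroup.map_equiv_eq_comap_symm' (φ x) f.ker]
    have hsymm : (MulEquiv.symm (φ x)).toMonoidHom = (φ x⁻¹).toMonoidHom := by
      ext g
      show (MulEquiv.symm (φ x)) g = (φ x⁻¹) g
      rw [map_inv]
      rfl
    rw [hsymm, MonoidHom.comap_ker, hfix]
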